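/- Let $s<n$ and suppose the scalars $(\mathfrak{p}_{ij}^k)$ satisfy the comultiplicativity identity $\mathfrak{p}_{ij}^{l+h}=\sum_{a+b=i,c+d=j}\mathfrak{p}_{ac}^l\mathfrak{p}_{bd}^h$, $\mathfrak{p}_{ij}^k=0$ for $k>i$, $\mathfrak{p}_{i0}^i=(\mathfrak{p}_{10}^1)^i$ with $\mathfrak{p}_{10}^1\ne 0$, the braid identity $\sum_{h=1}^{i}\mathfrak{p}_{ij}^h\mathfrak{p}_{h0}^1=\sum_{h=1}^{i}\sum_{l=1}^{j}\mathfrak{p}_{i0}^h\mathfrak{p}_{j0}^l\mathfrak{p}_{hl}^1$ for all $i,j>0$, and $(\mathfrak{p}_{10}^1)^r\ne 1$ for all $1\le r<s$. Then $\mathfrak{p}_{ij}^k=0$ whenever $i+j\le s$ and $i,j\ge 1$. -/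

import Mathlib

open Finset

/-- if `(p 1 0 1)^r ≠ 1` for `1 ≤ r < s`, then `p i j k = 0`
whenever `i + j ≤ s` and `i, j ≥ 1`. -/
theorem stmt18 {K : Type*} [Field K] [CharZero K] (n s : ℕ) (hs : s < n)
    (p : ℕ → ℕ → ℕ → K)
    (h0 : ∀ i j, p i j 0 = if i + j = 0 then 1 else 0)
    (hcm : ∀ i j l h : ℕ,
      p i j (l + h) = ∑ ab ∈ Finset.HasAntidiagonal.antidiagonal i, ∑ cd ∈ Finset.HasAntidiagonal.antidiagonal j,
        p ab.1 cd.1 l * p ab.2 cd.2 h)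
    (hvan : ∀ i j k, i < k → p i j k = 0)
    (hdiag : ∀ i, p i 0 i = (p 1 0 1) ^ i)
    (hne : p 1 0 1 ≠ 0)
    (hbraid : ∀ i j, 0 < i → 0 < j →
      ∑ h ∈ Finset.Icc 1 i, p i j h * p h 0 1 =
        ∑ h ∈ Finset.Icc 1 i, ∑ l ∈ Finset.Icc 1 j, p i 0 h * p j 0 l * p h l 1)
    (hroot : ∀ r, 1 ≤ r → r < s → (p 1 0 1) ^ r ≠ 1) :
    ∀ i j k, 1 ≤ i → 1 ≤ j → i + j ≤ s → p i j k = 0 := by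
  suffices H : ∀ r, ∀ i j, 1 ≤ i → 1 ≤ j → i + j = r → r ≤ s → ∀ k, p i j k = 0 by
    intro i j k hi hj hij
    exact H (i + j) i j hi hj rfl hij k
  intro r
  induction r using Nat.strong_induction_on with
  | _ r IH =>
    intro i j hi hj hij hrs
    -- Step 1: vanishing for upper index ≥ 2, using only the induction hypothesis.
    have hsub : ∀ m, 1 ≤ m → p i j (1 + m) = 0 := by
      intro m hm
      rw [hcm]
      apply Finset.sum_eq_zero
      intro ab hab
      apply Finset.sum_eq_zero
      intro cd hcd
      rw [Finset.HasAntidiagonal.mem_antidiagonal] at hab hcd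
      rcases Nat.eq_zero_or_pos ab.1 with ha0 | ha1
      · rw [ha0, hvan 0 cd.1 1 (by norm_num), zero_mul]
      rcases Nat.eq_zero_or_pos cd.1 with hc0 | hc1
      · rcases Nat.eq_zero_or_pos ab.2 with hb0 | hb1
        · rw [hb0, hvan 0 cd.2 m (by omega), mul_zero]
        · have hlt : ab.2 + cd.2 < r := by omega
          have hcj : cd.2 = j := by omega
          rw [IH (ab.2 + cd.2) hlt ab.2 cd.2 hb1 (by omega) rfl (by omega) m,
            mul_zero]
      rcases Nat.lt_or_ge (ab.1 + cd.1) r with hlt | hge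
      · rw [IH (ab.1 + cd.1) hlt ab.1 cd.1 ha1 hc1 rfl (by omega) 1, zero_mul]
      · have hb0 : ab.2 = 0 := by omega
        have hd0 : cd.2 = 0 := by omega
        rw [hb0, hd0, hvan 0 0 m (by omega), mul_zero]
    -- Step 2: the braid identity forces `p i j 1 = 0`.
    have h1 : p i j 1 = 0 := by
      have hq := hbraid i j hi hj
      have hL : (∑ h ∈ Finset.Icc 1 i, p i j h * p h 0 1) = p i j 1 * p 1 0 1 := by
        apply Finset.sum_eq_single_of_mem 1 (Finset.mem_Icc.mpr ⟨le_refl 1, hi⟩)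
        intro h hh hne1
        rw [Finset.mem_Icc] at hh
        rw [show h = 1 + (h - 1) by omega, hsub (h - 1) (by omega), zero_mul]
      have hR : (∑ h ∈ Finset.Icc 1 i, ∑ l ∈ Finset.Icc 1 j,
          p i 0 h * p j 0 l * p h l 1) = p i 0 i * p j 0 j * p i j 1 := by
        rw [Finset.sum_eq_single_of_mem i (Finset.mem_Icc.mpr ⟨hi, le_refl i⟩)]
        · apply Finset.sum_eq_single_of_mem j (Finset.mem_Icc.mpr ⟨hj, le_refl j⟩)
          intro l hl hlj
          rw [Finset.mem_Icc] at hl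
          rw [IH (i + l) (by omega) i l hi hl.1 rfl (by omega) 1, mul_zero]
        · intro h hh hhi
          rw [Finset.mem_Icc] at hh
          apply Finset.sum_eq_zero
          intro l hl
          rw [Finset.mem_Icc] at hl
          rw [IH (h + l) (by omega) h l hh.1 hl.1 rfl (by omega) 1, mul_zero]
      rw [hL, hR, hdiag i, hdiag j, ← pow_add, hij] at hq
      -- hq : p i j 1 * p 1 0 1 = p 1 0 1 ^ r * p i j 1
      by_contra hP
      have hqr : p 1 0 1 ^ r = p 1 0 1 :=
        (mul_right_cancel₀ hP (show p 1 0 1 * p i j 1 = p 1 0 1 ^ r * p i j 1 by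
          linear_combination hq)).symm
      have hr1 : p 1 0 1 ^ (r - 1) = 1 := by
        have : p 1 0 1 ^ (r - 1) * p 1 0 1 = 1 * p 1 0 1 := by
          rw [← pow_succ, show r - 1 + 1 = r by omega, hqr, one_mul]
        exact mul_right_cancel₀ hne this
      exact hroot (r - 1) (by omega) (by omega) hr1
    -- Step 3: conclude for all upper indices.
    intro k
    match k with
    | 0 => rw [h0]; simp; omega
    | 1 => exact h1
    | (m + 2) => rw [show m + 2 = 1 + (m + 1) by omega]; exact hsub (m + 1) (by omega)
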